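/- Let w be a cooperative interval game on a finite player set N. Then the following are equivalent: (i) for every nonempty coalition U ⊆ N and all coalitions U₁ ⊊ U₂ ⊆ N ∖ U one has w̄(U₁ ∪ U) − w̲(U₁) ≤ w̲(U₂ ∪ U) − w̄(U₂); (ii) for every player i ∈ N and all coalitions T₁ ⊊ T₂ ⊆ N ∖ {i} one has w̄(T₁ ∪ {i}) − w̲(T₁) ≤ w̲(T₂ ∪ {i}) − w̄(T₂). -/

import Mathlib

open Finset

variable {N : Type*} [Fintype N] [DecidableEq N]

/-- A cooperative interval game, given by its lower and upper border games. -/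
def IsIntervalGame (wl wu : Finset N → ℝ) : Prop :=
  (∀ S, wl S ≤ wu S) ∧ wl ∅ = 0 ∧ wu ∅ = 0

/-- A selection of the interval game `(wl, wu)`. -/
def IsSelection (wl wu v : Finset N → ℝ) : Prop :=
  v ∅ = 0 ∧ ∀ S, wl S ≤ v S ∧ v S ≤ wu S

/-- Convexity (supermodularity) of a cooperative game. -/
def IsConvexGame (v : Finset N → ℝ) : Prop :=
  ∀ S T, v S + v T ≤ v (S ∪ T) + v (S ∩ T)

/-- Membership of a payoff vector in the core of a cooperative game. -/
def InCore (v : Finset N → ℝ) (x : N → ℝ) : Prop :=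
  (∑ i, x i) = v Finset.univ ∧ ∀ S : Finset N, v S ≤ ∑ i ∈ S, x i

/-- The selection core of an interval game. -/
def selectionCore (wl wu : Finset N → ℝ) : Set (N → ℝ) :=
  {x | ∃ v, IsSelection wl wu v ∧ InCore v x}

/-- `gen` of the interval core of an interval game: all real payoff vectors generated by
some element `(X i)_{i}` (given by lower bounds `Xl` and upper bounds `Xu`) of the interval core. -/
def genIntervalCore (wl wu : Finset N → ℝ) : Set (N → ℝ) :=
  {x | ∃ Xl Xu : N → ℝ, (∀ i, Xl i ≤ Xu i) ∧
    (∑ i, Xl i) = wl Finset.univ ∧ (∑ i, Xu i) = wu Finset.univ ∧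
    (∀ S : Finset N, S.Nonempty → wl S ≤ ∑ i ∈ S, Xl i ∧ wu S ≤ ∑ i ∈ S, Xu i) ∧
    ∀ i, Xl i ≤ x i ∧ x i ≤ Xu i}

/-- The Shapley coefficient `|S|! (n - |S| - 1)! / n!`. -/
noncomputable def shapleyCoeff (n k : ℕ) : ℝ :=
  (Nat.factorial k * Nat.factorial (n - k - 1) : ℝ) / (Nat.factorial n : ℝ)

/-- The Shapley value of a cooperative game. -/
noncomputable def shapley (v : Finset N → ℝ) (i : N) : ℝ :=
  ∑ S ∈ (Finset.univ.erase i).powerset,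
    shapleyCoeff (Fintype.card N) S.card * (v (insert i S) - v S)

/-- Lower endpoint of the interval Shapley value extension `Φ*`. -/
noncomputable def phiLow (wl wu : Finset N → ℝ) (i : N) : ℝ :=
  ∑ S ∈ (Finset.univ.erase i).powerset,
    shapleyCoeff (Fintype.card N) S.card * (wl (insert i S) - wu S)

/-- Upper endpoint of the interval Shapley value extension `Φ*`. -/
noncomputable def phiHigh (wl wu : Finset N → ℝ) (i : N) : ℝ :=
  ∑ S ∈ (Finset.univ.erase i).powerset,
    shapleyCoeff (Fintype.card N) S.card * (wu (insert i S) - wl S)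

theorem union_condition_iff_singleton_condition (wl wu : Finset N → ℝ)
    (hw : IsIntervalGame wl wu) :
    (∀ (U U₁ U₂ : Finset N), U.Nonempty → U₁ ⊂ U₂ → U₂ ⊆ Finset.univ \ U →
        wu (U₁ ∪ U) - wl U₁ ≤ wl (U₂ ∪ U) - wu U₂) ↔
      ∀ (i : N) (T₁ T₂ : Finset N), T₁ ⊂ T₂ → T₂ ⊆ Finset.univ \ {i} →
        wu (insert i T₁) - wl T₁ ≤ wl (insert i T₂) - wu T₂ := by
  constructor
  · intro h i T₁ T₂ h12 h2
    have := h {i} T₁ T₂ (Finset.singleton_nonempty i) h12 (by simpa using h2)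
    rw [Finset.union_comm T₁, Finset.union_comm T₂, ← Finset.insert_eq, ← Finset.insert_eq] at this
    exact this
  · intro h U
    induction U using Finset.cons_induction with
    | empty => rintro U₁ U₂ hne h12 h2; simp at hne
    | cons i U' hi IH =>
      rintro U₁ U₂ - h12 h2
      have h2' : ∀ x ∈ U₂, x ≠ i ∧ x ∉ U' := by
        intro x hx
        have := h2 hx
        simp [Finset.mem_sdiff, Finset.mem_cons] at this
        exact ⟨this.1, this.2⟩
      rcases U'.eq_empty_or_nonempty with rfl | hU'
      · have := h i U₁ U₂ h12 (by
          intro x hx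
          simp [Finset.mem_sdiff]
          exact (h2' x hx).1)
        rw [Finset.cons_empty, Finset.union_comm U₁, Finset.union_comm U₂, ← Finset.insert_eq, ← Finset.insert_eq]
        exact this
      · obtain ⟨x, hx2, hx1⟩ := Finset.exists_of_ssubset h12
        have hT : U₁ ∪ U' ⊂ U₂ ∪ U' := by
          refine ⟨Finset.union_subset_union_left h12.subset, fun hsub => ?_⟩
          have := hsub (Finset.mem_union_left _ hx2)
          rcases Finset.mem_union.mp this with h' | h'
          · exact hx1 h'
          · exact (h2' x hx2).2 h'
        have hA := h i (U₁ ∪ U') (U₂ ∪ U') hT (by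
          intro y hy
          simp only [Finset.mem_sdiff, Finset.mem_univ, true_and, Finset.mem_singleton]
          rcases Finset.mem_union.mp hy with h' | h'
          · exact (h2' y h').1
          · rintro rfl; exact hi h')
        have hB := IH U₁ U₂ hU' h12 (by
          intro y hy
          simp only [Finset.mem_sdiff, Finset.mem_univ, true_and]
          exact (h2' y hy).2)
        have hC := hw.1 (U₁ ∪ U')
        have hD := hw.1 (U₂ ∪ U')
        have e1 : U₁ ∪ Finset.cons i U' hi = insert i (U₁ ∪ U') := by
          simp [Finset.cons_eq_insert, Finset.union_insert]
        have e2 : U₂ ∪ Finset.cons i U' hi = insert i (U₂ ∪ U') := by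
          simp [Finset.cons_eq_insert, Finset.union_insert]
        rw [e1, e2]
        linarith
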